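/- Let m ≥ 2, n = 2^m - 1, and h an integer with 1 ≤ h ≤ ⌈(m+1)/2⌉. For every odd integer j with 1 ≤ j ≤ 2^h - 1, the size of the 2-cyclotomic coset of j modulo n equals m, unless m is even and j = 2^(m/2) + 1, in which case the size equals m/2. -/

import Mathlib

private lemma dvd_two_pow_sub_one_iff (d ℓ : ℕ) :
    d ∣ 2 ^ ℓ - 1 ↔ (2 : ZMod d) ^ ℓ = 1 := by
  rw [← Nat.modEq_iff_dvd' (Nat.one_le_pow ℓ 2 (by norm_num))]
  constructor
  · intro hmod
    have := (ZMod.natCast_eq_natCast_iff _ _ _).2 hmod.symm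
    push_cast at this
    simpa using this
  · intro hpow
    have : ((2 ^ ℓ : ℕ) : ZMod d) = ((1 : ℕ) : ZMod d) := by push_cast; simpa using hpow
    exact ((ZMod.natCast_eq_natCast_iff _ _ _).1 this).symm

private lemma sq_sub_one_fac (e : ℕ) : (2 ^ e - 1) * (2 ^ e + 1) = 2 ^ (2 * e) - 1 := by
  have h : 1 ≤ 2 ^ e := Nat.one_le_pow _ _ (by norm_num)
  have h2 : 2 ^ (2 * e) = 2 ^ e * 2 ^ e := by rw [two_mul, pow_add]
  obtain ⟨y, hy⟩ := Nat.exists_eq_add_of_le h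
  rw [h2, hy]
  have hr : (1 + y) * (1 + y) = y * (1 + y + 1) + 1 := by ring
  have hl : 1 + y - 1 = y := by omega
  rw [hl, hr]
  omega

theorem coset_size_of_small_odd (m h : ℕ) (hm : 2 ≤ m)
    (hh1 : 1 ≤ h) (hh2 : h ≤ (m + 2) / 2) (j : ℕ)
    (hodd : Odd j) (hj1 : 1 ≤ j) (hj2 : j ≤ 2 ^ h - 1) :
    (¬ (Even m ∧ j = 2 ^ (m / 2) + 1) →
      sInf {ℓ : ℕ | 0 < ℓ ∧ 2 ^ ℓ * j ≡ j [MOD 2 ^ m - 1]} = m) ∧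
    ((Even m ∧ j = 2 ^ (m / 2) + 1) →
      sInf {ℓ : ℕ | 0 < ℓ ∧ 2 ^ ℓ * j ≡ j [MOD 2 ^ m - 1]} = m / 2) := by
  set n := 2 ^ m - 1 with hn
  have hm0 : 0 < m := by omega
  have h4m : 4 ≤ 2 ^ m := by
    calc (4 : ℕ) = 2 ^ 2 := rfl
    _ ≤ 2 ^ m := Nat.pow_le_pow_right (by norm_num) hm
  have hn3 : 3 ≤ n := by omega
  set g := Nat.gcd n j with hg
  set d := n / g with hd
  have hgpos : 0 < g := Nat.gcd_pos_of_pos_right _ hj1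
  have hgn : g ∣ n := Nat.gcd_dvd_left _ _
  have hgj : g ∣ j := Nat.gcd_dvd_right _ _
  have hdg : d * g = n := Nat.div_mul_cancel hgn
  have hdpos : 0 < d := by
    rcases Nat.eq_zero_or_pos d with h0 | h0
    · rw [h0, zero_mul] at hdg; omega
    · exact h0
  have hdn : d ∣ n := ⟨g, hdg.symm⟩
  -- characterization of the congruence
  have key : ∀ ℓ : ℕ, (2 ^ ℓ * j ≡ j [MOD n]) ↔ d ∣ 2 ^ ℓ - 1 := by
    intro ℓ
    have h1 : j ≤ 2 ^ ℓ * j := Nat.le_mul_of_pos_left _ (Nat.pow_pos (by norm_num))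
    have hsub : 2 ^ ℓ * j - j = (2 ^ ℓ - 1) * j := by
      rw [Nat.sub_mul, one_mul]
    constructor
    · intro hc
      have hdvd : n ∣ (2 ^ ℓ - 1) * j := by
        rw [← hsub]; exact (Nat.modEq_iff_dvd' h1).1 hc.symm
      set j' := j / g with hj'
      have hj'g : j' * g = j := Nat.div_mul_cancel hgj
      have hcop : Nat.Coprime d j' := Nat.coprime_div_gcd_div_gcd hgpos
      have : d * g ∣ (2 ^ ℓ - 1) * j' * g := by
        rw [hdg, mul_assoc, hj'g]; exact hdvd
      have hdj : d ∣ (2 ^ ℓ - 1) * j' :=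
        (Nat.mul_dvd_mul_iff_right hgpos).1 this
      exact hcop.dvd_of_dvd_mul_right hdj
    · intro hc
      have : n ∣ (2 ^ ℓ - 1) * j := by
        rw [← hdg]; exact mul_dvd_mul hc hgj
      exact ((Nat.modEq_iff_dvd' h1).2 (hsub ▸ this)).symm
  set e := orderOf (2 : ZMod d) with he
  have h2m1 : d ∣ 2 ^ m - 1 := hn ▸ hdn
  have hpow_m : (2 : ZMod d) ^ m = 1 := (dvd_two_pow_sub_one_iff d m).1 h2m1
  have hepos : 0 < e := orderOf_pos_iff.2 (isOfFinOrder_iff_pow_eq_one.2 ⟨m, hm0, hpow_m⟩)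
  have hedvdm : e ∣ m := orderOf_dvd_iff_pow_eq_one.2 hpow_m
  have hde : d ∣ 2 ^ e - 1 := (dvd_two_pow_sub_one_iff d e).2 (pow_orderOf_eq_one _)
  have hSet : {ℓ : ℕ | 0 < ℓ ∧ 2 ^ ℓ * j ≡ j [MOD n]} = {ℓ : ℕ | 0 < ℓ ∧ e ∣ ℓ} := by
    ext ℓ
    simp only [Set.mem_setOf_eq, key ℓ, dvd_two_pow_sub_one_iff, ← orderOf_dvd_iff_pow_eq_one]
    exact Iff.rfl
  have hInf : sInf {ℓ : ℕ | 0 < ℓ ∧ 2 ^ ℓ * j ≡ j [MOD n]} = e := by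
    rw [hSet]
    have hne : ({ℓ : ℕ | 0 < ℓ ∧ e ∣ ℓ}).Nonempty := ⟨e, hepos, dvd_rfl⟩
    obtain ⟨hpos, hdvd⟩ := Nat.sInf_mem hne
    exact le_antisymm (Nat.sInf_le ⟨hepos, dvd_rfl⟩) (Nat.le_of_dvd hpos hdvd)
  rw [hInf]
  have h2e1 : 1 ≤ 2 ^ e := Nat.one_le_pow _ _ (by norm_num)
  have hdle : d ≤ 2 ^ e - 1 := Nat.le_of_dvd (by
    have : 2 ≤ 2 ^ e := by calc (2:ℕ) = 2^1 := rfl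
                            _ ≤ 2 ^ e := Nat.pow_le_pow_right (by norm_num) hepos
    omega) hde
  have hgle : g ≤ j := Nat.le_of_dvd hj1 hgj
  constructor
  · -- generic case
    intro hnP
    by_contra hne
    have hem : e < m := lt_of_le_of_ne (Nat.le_of_dvd hm0 hedvdm) hne
    obtain ⟨q, hq⟩ := hedvdm
    have hq2 : 2 ≤ q := by
      rcases Nat.lt_or_ge q 2 with hlt | hge
      · interval_cases q <;> omega
      · exact hge
    rcases Nat.eq_or_lt_of_le hq2 with hq2' | hq3
    · -- q = 2 : m = 2e, show exception holds
      have hm2e : m = 2 * e := by rw [hq, ← hq2']; ring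
      have hhe : h ≤ e + 1 := by omega
      have hjle : j ≤ 2 ^ (e + 1) - 1 := le_trans hj2 (by
        have := Nat.pow_le_pow_right (show 1 ≤ 2 by norm_num) hhe
        omega)
      have hgle2 : g ≤ 2 ^ (e + 1) - 1 := le_trans hgle hjle
      have hnval : n = 2 ^ (2 * e) - 1 := by rw [hn, hm2e]
      -- first: d = 2 ^ e - 1
      obtain ⟨c, hc⟩ := hde
      have hc1 : c = 1 := by
        have hc0 : c ≠ 0 := by
          intro h0; rw [h0, mul_zero] at hc
          have : 2 ≤ 2 ^ e := by
            calc (2:ℕ) = 2^1 := rfl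
            _ ≤ 2 ^ e := Nat.pow_le_pow_right (by norm_num) hepos
          omega
        by_contra hcne
        have hc2 : 2 ≤ c := by omega
        have h2d : 2 * d ≤ 2 ^ e - 1 := by
          calc 2 * d ≤ c * d := Nat.mul_le_mul_right d hc2
          _ = 2 ^ e - 1 := by rw [mul_comm]; exact hc.symm
        -- n = d * g ≤ d * (2^(e+1)-1), so 2n ≤ 2d*(2^(e+1)-1) ≤ (2^e-1)*(2^(e+1)-1) < 2n
        have hb1 : 2 * n ≤ (2 * d) * (2 ^ (e + 1) - 1) := by
          calc 2 * n = 2 * (d * g) := by rw [hdg]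
          _ ≤ 2 * (d * (2 ^ (e + 1) - 1)) := by
              exact Nat.mul_le_mul_left 2 (Nat.mul_le_mul_left d hgle2)
          _ = (2 * d) * (2 ^ (e + 1) - 1) := by ring
        have hb2 : (2 * d) * (2 ^ (e + 1) - 1) ≤ (2 ^ e - 1) * (2 ^ (e + 1) - 1) :=
          Nat.mul_le_mul_right _ h2d
        -- arithmetic contradiction, with a = 2 ^ e
        have ha2 : 2 ≤ 2 ^ e := by
          calc (2:ℕ) = 2^1 := rfl
          _ ≤ 2 ^ e := Nat.pow_le_pow_right (by norm_num) hepos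
        obtain ⟨y, hy⟩ := Nat.exists_eq_add_of_le ha2
        have h2e2 : 2 ^ (e + 1) = 2 * 2 ^ e := by rw [pow_succ]; ring
        have h2e2e : 2 ^ (2 * e) = 2 ^ e * 2 ^ e := by rw [two_mul, pow_add]
        rw [hnval, h2e2e, h2e2, hy] at hb1
        rw [h2e2, hy] at hb2
        have hkey : (2 + y - 1) * (2 * (2 + y) - 1) + 3 * (2 + y) = 2 * ((2 + y) * (2 + y)) + 1 := by
          have ha : 2 + y - 1 = 1 + y := by omega
          have hb : 2 * (2 + y) - 1 = 3 + 2 * y := by omega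
          rw [ha, hb]; ring
        omega
      rw [hc1, mul_one] at hc
      -- g = 2 ^ e + 1
      have hgval : g = 2 ^ e + 1 := by
        have : d * g = d * (2 ^ e + 1) := by
          rw [hdg, hnval, ← sq_sub_one_fac e, hc]
        exact Nat.eq_of_mul_eq_mul_left hdpos this
      -- j = g
      obtain ⟨c', hc'⟩ := hgj
      have hc'1 : c' = 1 := by
        have hc'0 : c' ≠ 0 := by intro h0; rw [h0, mul_zero] at hc'; omega
        by_contra hc'ne
        have : 2 * g ≤ j := by
          calc 2 * g = g * 2 := by ring
          _ ≤ g * c' := Nat.mul_le_mul_left g (by omega)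
          _ = j := hc'.symm
        have h2e2 : 2 ^ (e + 1) = 2 * 2 ^ e := by rw [pow_succ]; ring
        rw [hgval] at this
        omega
      rw [hc'1, mul_one] at hc'
      exact hnP ⟨⟨e, by omega⟩, by rw [hc', hgval, hm2e]; norm_num⟩
    · -- q ≥ 3 : size contradiction
      have h3e : 3 * e ≤ m := by
        calc 3 * e = e * 3 := by ring
        _ ≤ e * q := Nat.mul_le_mul_left e hq3
        _ = m := hq.symm
      have heh : e + h ≤ m := by omega
      have hab : 2 ^ e * 2 ^ h ≤ 2 ^ m := by
        rw [← pow_add]; exact Nat.pow_le_pow_right (by norm_num) heh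
      have hnle : n ≤ (2 ^ e - 1) * (2 ^ h - 1) := by
        rw [← hdg]; exact Nat.mul_le_mul hdle (le_trans hgle hj2)
      have ha2 : 2 ≤ 2 ^ e := by
        calc (2:ℕ) = 2^1 := rfl
        _ ≤ 2 ^ e := Nat.pow_le_pow_right (by norm_num) hepos
      have hb2 : 2 ≤ 2 ^ h := by
        calc (2:ℕ) = 2^1 := rfl
        _ ≤ 2 ^ h := Nat.pow_le_pow_right (by norm_num) hh1
      obtain ⟨y, hy⟩ := Nat.exists_eq_add_of_le ha2
      obtain ⟨z, hz⟩ := Nat.exists_eq_add_of_le hb2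
      have hkey : (2 + y - 1) * (2 + z - 1) + (2 + y) + (2 + z) = (2 + y) * (2 + z) + 1 := by
        have h1 : 2 + y - 1 = 1 + y := by omega
        have h2 : 2 + z - 1 = 1 + z := by omega
        rw [h1, h2]; ring
      rw [hy, hz] at hnle hab
      omega
  · -- exception case
    rintro ⟨⟨k', hk'⟩, hjval⟩
    set k := m / 2 with hk
    have hm2k : m = 2 * k := by omega
    have hkpos : 0 < k := by omega
    have hnfac : n = (2 ^ k - 1) * j := by
      rw [hjval, hn, hm2k, sq_sub_one_fac]
    have hjn : j ∣ n := Dvd.intro_left _ hnfac.symm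
    have hgj2 : g = j := Nat.gcd_eq_right hjn
    have hdval : d = 2 ^ k - 1 := by
      have : d * j = (2 ^ k - 1) * j := by
        conv_lhs => rw [← hgj2, hdg, hnfac]
      exact Nat.eq_of_mul_eq_mul_right hj1 this
    have hdk : d ∣ 2 ^ k - 1 := by rw [hdval]
    have hek : e ∣ k := orderOf_dvd_iff_pow_eq_one.2 ((dvd_two_pow_sub_one_iff d k).1 hdk)
    have hle1 : e ≤ k := Nat.le_of_dvd hkpos hek
    have hle2 : k ≤ e := by
      have : 2 ^ k - 1 ≤ 2 ^ e - 1 := hdval ▸ hdle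
      have hp : 2 ^ k ≤ 2 ^ e := by
        have h1k : 1 ≤ 2 ^ k := Nat.one_le_pow _ _ (by norm_num)
        omega
      exact (Nat.pow_le_pow_iff_right (by norm_num)).1 hp
    omega
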